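/- Let a, b ∈ ℝ² with b₁ < b₂, and Z standard normal. Then E[max(a₁ + b₁Z, a₂ + b₂Z)] − max(a₁, a₂) = (b₂ − b₁)·f(−|c|) where c = (a₁ − a₂)/(b₂ − b₁) and f(z) = φ(z) + zΦ(z). -/

import Mathlib

open MeasureTheory ProbabilityTheory Real

/-- The standard normal pdf `φ`. -/
noncomputable def stdNormalPdf (z : ℝ) : ℝ := Real.exp (-z ^ 2 / 2) / Real.sqrt (2 * π)

/-- The standard normal cdf `Φ`. -/
noncomputable def stdNormalCdf (z : ℝ) : ℝ := ∫ t in Set.Iic z, stdNormalPdf t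

open Set Filter Topology

lemma pdf_eq : gaussianPDFReal 0 1 = stdNormalPdf := by
  funext x
  simp [gaussianPDFReal, stdNormalPdf, div_eq_inv_mul]

lemma pdf_even (x : ℝ) : stdNormalPdf (-x) = stdNormalPdf x := by
  simp [stdNormalPdf]

lemma integrable_pdf : Integrable stdNormalPdf := by
  have := integrable_gaussianPDFReal 0 1
  rwa [pdf_eq] at this

lemma integrable_mul_pdf : Integrable (fun x => stdNormalPdf x * x) := by
  have h := (integrable_rpow_mul_exp_neg_mul_sq (b := (1:ℝ)/2) (by norm_num) (s := 1)
    (by norm_num)).mul_const (Real.sqrt (2 * π))⁻¹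
  apply h.congr
  filter_upwards with x
  rw [Real.rpow_one]
  unfold stdNormalPdf
  rw [show -(1/2 : ℝ) * x ^ 2 = -x ^ 2 / 2 by ring]
  ring

lemma integrable_neg_mul_pdf : Integrable (fun z : ℝ => -z * stdNormalPdf z) := by
  apply integrable_mul_pdf.neg.congr
  filter_upwards with x
  show -(stdNormalPdf x * x) = -x * stdNormalPdf x
  ring

lemma hasDerivAt_pdf (x : ℝ) : HasDerivAt stdNormalPdf (-x * stdNormalPdf x) x := by
  have h1 : HasDerivAt (fun z : ℝ => -z ^ 2 / 2) (-x) x := by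
    have h : HasDerivAt (fun z : ℝ => -z ^ 2 / 2) (-((2:ℕ) * x ^ (2 - 1)) / 2) x :=
      (hasDerivAt_pow 2 x).neg.div_const 2
    convert h using 1
    simp
    ring
  have h2 := (h1.exp).div_const (Real.sqrt (2 * π))
  have heq : -x * stdNormalPdf x = Real.exp (-x ^ 2 / 2) * (-x) / Real.sqrt (2 * π) := by
    unfold stdNormalPdf; ring
  rw [heq]
  exact h2

lemma tendsto_pdf_atTop : Tendsto stdNormalPdf atTop (𝓝 0) := by
  have h1 : Tendsto (fun z : ℝ => -z ^ 2 / 2) atTop atBot := by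
    apply Tendsto.atBot_div_const (by norm_num : (0:ℝ) < 2)
    simpa using (tendsto_pow_atTop (two_ne_zero)).const_mul_atTop_of_neg
      (by norm_num : (-1 : ℝ) < 0)
  have h2 := (Real.tendsto_exp_atBot.comp h1).div_const (Real.sqrt (2 * π))
  rw [zero_div] at h2
  exact Filter.Tendsto.congr (fun x => rfl) h2

lemma tendsto_pdf_atBot : Tendsto stdNormalPdf atBot (𝓝 0) := by
  have := tendsto_pdf_atTop.comp tendsto_neg_atBot_atTop
  exact Filter.Tendsto.congr (fun x => pdf_even x) this

lemma ftc_pdf (d : ℝ) : ∫ z in Iic d, -z * stdNormalPdf z = stdNormalPdf d := by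
  have h := integral_Iic_of_hasDerivAt_of_tendsto' (a := d)
    (fun x _ => hasDerivAt_pdf x)
    (integrable_neg_mul_pdf.integrableOn)
    tendsto_pdf_atBot
  rw [h, sub_zero]

lemma ftc_pdf_Ioi (d : ℝ) : ∫ z in Ioi d, -z * stdNormalPdf z = -stdNormalPdf d := by
  have h := integral_Ioi_of_hasDerivAt_of_tendsto' (a := d)
    (fun x _ => hasDerivAt_pdf x)
    (integrable_neg_mul_pdf.integrableOn)
    tendsto_pdf_atTop
  rw [h, zero_sub]

lemma integral_pdf_one : ∫ z, stdNormalPdf z = 1 := by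
  have := integral_gaussianPDFReal_eq_one 0 (one_ne_zero)
  rwa [pdf_eq] at this

lemma intZ : ∫ z, stdNormalPdf z * z = 0 := by
  have hi : Integrable (fun z : ℝ => -z * stdNormalPdf z) := integrable_neg_mul_pdf
  have h := intervalIntegral.integral_Iic_add_Ioi (b := (0:ℝ)) (f := fun z => -z * stdNormalPdf z)
    hi.integrableOn hi.integrableOn
  rw [ftc_pdf, ftc_pdf_Ioi, add_neg_cancel] at h
  have h2 : ∫ z, stdNormalPdf z * z = -∫ z, -z * stdNormalPdf z := by
    rw [← integral_neg]
    congr 1; funext z; ring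
  rw [h2, ← h, neg_zero]

lemma cdf_neg (d : ℝ) : stdNormalCdf (-d) = 1 - stdNormalCdf d := by
  have h1 : stdNormalCdf (-d) = ∫ z in Ioi d, stdNormalPdf z := by
    unfold stdNormalCdf
    calc ∫ z in Iic (-d), stdNormalPdf z = ∫ z in Iic (-d), stdNormalPdf (-z) := by
          simp_rw [pdf_even]
      _ = ∫ z in Ioi (-(-d)), stdNormalPdf z := integral_comp_neg_Iic _ _
      _ = ∫ z in Ioi d, stdNormalPdf z := by rw [neg_neg]
  have h2 := intervalIntegral.integral_Iic_add_Ioi (b := d) (f := stdNormalPdf)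
    integrable_pdf.integrableOn integrable_pdf.integrableOn
  rw [integral_pdf_one] at h2
  unfold stdNormalCdf at *
  linarith [h1, h2]

lemma key_int (d : ℝ) :
    ∫ z in Iic d, stdNormalPdf z * (d - z) = d * stdNormalCdf d + stdNormalPdf d := by
  have heq : ∀ z : ℝ, stdNormalPdf z * (d - z) = d * stdNormalPdf z + -z * stdNormalPdf z := by
    intro z; ring
  simp_rw [heq]
  rw [integral_add ((integrable_pdf.integrableOn).const_mul d)
    (integrable_neg_mul_pdf.integrableOn),
    integral_const_mul _, ftc_pdf]
  rfl

/-- two-alternative closed form of the value of information: for `b₁ < b₂`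
and `Z` standard normal, `E[max(a₁ + b₁Z, a₂ + b₂Z)] − max(a₁, a₂) = (b₂ − b₁)·f(−|c|)`
where `c = (a₁ − a₂)/(b₂ − b₁)` and `f(z) = φ(z) + zΦ(z)`. -/
theorem stmt9 (a₁ a₂ b₁ b₂ : ℝ) (hb : b₁ < b₂) (c : ℝ) (hc : c = (a₁ - a₂) / (b₂ - b₁)) :
    (∫ z, max (a₁ + b₁ * z) (a₂ + b₂ * z) ∂(gaussianReal 0 1)) - max a₁ a₂
      = (b₂ - b₁) * (stdNormalPdf (-|c|) + (-|c|) * stdNormalCdf (-|c|)) := by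
  have hbb : (0:ℝ) < b₂ - b₁ := sub_pos.2 hb
  have hca : (b₂ - b₁) * c = a₁ - a₂ := by
    rw [hc]; field_simp
  -- rewrite the max
  have hrw : ∀ z : ℝ, max (a₁ + b₁ * z) (a₂ + b₂ * z)
      = a₂ + b₂ * z + (b₂ - b₁) * max (c - z) 0 := by
    intro z
    rw [mul_max_of_nonneg _ _ hbb.le, mul_zero, ← max_add_add_left]
    congr 1
    · linear_combination -hca
    · ring
  simp_rw [hrw]
  -- convert to a Lebesgue integral against the density
  have hgauss : ∀ g : ℝ → ℝ,
      ∫ z, g z ∂(gaussianReal 0 1) = ∫ z, stdNormalPdf z * g z := by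
    intro g
    rw [gaussianReal_of_var_ne_zero 0 one_ne_zero]
    have hmeq : (volume.withDensity (gaussianPDF 0 1))
        = volume.withDensity fun x => ((gaussianPDFReal 0 1 x).toNNReal : ENNReal) := rfl
    rw [hmeq, integral_withDensity_eq_integral_smul
      ((measurable_gaussianPDFReal 0 1).real_toNNReal) g]
    congr 1
    funext x
    rw [NNReal.smul_def, smul_eq_mul, Real.coe_toNNReal _ (gaussianPDFReal_nonneg 0 1 x),
      pdf_eq]
  rw [hgauss]
  -- indicator form for the max term
  have hind : (fun z => stdNormalPdf z * max (c - z) 0)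
      = (Set.Iic c).indicator (fun z => stdNormalPdf z * (c - z)) := by
    funext z
    by_cases h : z ≤ c
    · rw [Set.indicator_of_mem (Set.mem_Iic.2 h), max_eq_left (sub_nonneg.2 h)]
    · rw [Set.indicator_of_notMem (by simpa using h),
        max_eq_right (sub_nonpos.2 (le_of_not_ge h)), mul_zero]
  have iIic : IntegrableOn (fun z => stdNormalPdf z * (c - z)) (Iic c) volume := by
    have heq2 : (fun z : ℝ => stdNormalPdf z * (c - z))
        = fun z => c * stdNormalPdf z + -(stdNormalPdf z * z) := by funext z; ring
    rw [heq2]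
    exact ((integrable_pdf.const_mul c).add integrable_mul_pdf.neg).integrableOn
  have i3 : Integrable (fun z => stdNormalPdf z * max (c - z) 0) := by
    rw [hind]; exact iIic.integrable_indicator measurableSet_Iic
  have i1 : Integrable (fun z => a₂ * stdNormalPdf z) := integrable_pdf.const_mul a₂
  have i2 : Integrable (fun z => b₂ * (stdNormalPdf z * z)) := integrable_mul_pdf.const_mul b₂
  have split : ∀ z : ℝ, stdNormalPdf z * (a₂ + b₂ * z + (b₂ - b₁) * max (c - z) 0)
      = a₂ * stdNormalPdf z
        + (b₂ * (stdNormalPdf z * z) + (b₂ - b₁) * (stdNormalPdf z * max (c - z) 0)) := by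
    intro z; ring
  simp_rw [split]
  have i23 : Integrable (fun z => b₂ * (stdNormalPdf z * z)
      + (b₂ - b₁) * (stdNormalPdf z * max (c - z) 0)) := i2.add (i3.const_mul (b₂ - b₁))
  rw [integral_add i1 i23, integral_add i2 (i3.const_mul (b₂ - b₁)),
    integral_const_mul _, integral_const_mul _, integral_const_mul _, integral_pdf_one, intZ,
    hind, integral_indicator measurableSet_Iic, key_int]
  rcases le_total a₁ a₂ with h | h
  · have hc0 : c ≤ 0 := by
      rw [hc]
      exact div_nonpos_of_nonpos_of_nonneg (sub_nonpos.2 h) hbb.le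
    rw [abs_of_nonpos hc0, neg_neg, max_eq_right h]
    ring
  · have hc0 : 0 ≤ c := by
      rw [hc]
      exact div_nonneg (sub_nonneg.2 h) hbb.le
    rw [abs_of_nonneg hc0, max_eq_left h, pdf_even, cdf_neg]
    linear_combination hca
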